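/- For n = 2, the Bäcklund transformation Q₁⁺ = (z₁²/(z₂ − Q₁z₁)²)·Q₁, Q₂⁺ = (z₂ − Q₁z₁)·z₂·Q₂, z₁⁺ = (1/(1−Q₁⁺))·(z₁z₂/(z₂ − Q₁z₁)), z₂⁺ = ((1−Q₁⁺)/(1−Q₂⁺))·(z₂ − Q₁z₁) preserves the Hamiltonian: (1−Q₁⁺)z₁⁺ + (1−Q₂⁺)z₂⁺ + (1−Q₁⁺)(z₂⁺)^{-1} + (z₁⁺)^{-1} = (1−Q₁)z₁ + (1−Q₂)z₂ + (1−Q₁)z₂^{-1} + z₁^{-1}. -/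

import Mathlib

/-- For `n = 2`, the Bäcklund transformation preserves the Hamiltonian
`H = (1−Q₁)z₁ + (1−Q₂)z₂ + (1−Q₁)z₂⁻¹ + z₁⁻¹`. -/
theorem backlund_preserves_hamiltonian_n2 {K : Type*} [Field K]
    (z₁ z₂ Q₁ Q₂ : K) (hz₁ : z₁ ≠ 0) (hz₂ : z₂ ≠ 0) (hM : z₂ - Q₁ * z₁ ≠ 0)
    (Q₁p Q₂p z₁p z₂p : K)
    (hQ₁p : Q₁p = z₁ ^ 2 / (z₂ - Q₁ * z₁) ^ 2 * Q₁)
    (hQ₂p : Q₂p = (z₂ - Q₁ * z₁) * z₂ * Q₂)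
    (h1 : 1 - Q₁p ≠ 0) (h2 : 1 - Q₂p ≠ 0)
    (hz₁p : z₁p = 1 / (1 - Q₁p) * (z₁ * z₂ / (z₂ - Q₁ * z₁)))
    (hz₂p : z₂p = (1 - Q₁p) / (1 - Q₂p) * (z₂ - Q₁ * z₁)) :
    (1 - Q₁p) * z₁p + (1 - Q₂p) * z₂p + (1 - Q₁p) * z₂p⁻¹ + z₁p⁻¹ =
      (1 - Q₁) * z₁ + (1 - Q₂) * z₂ + (1 - Q₁) * z₂⁻¹ + z₁⁻¹ := by
  have hz₁p' : z₁p = z₁ * z₂ / ((1 - Q₁p) * (z₂ - Q₁ * z₁)) := by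
    rw [hz₁p]; field_simp
  have e1 : (1 - Q₁p) * z₁p = z₁ * z₂ / (z₂ - Q₁ * z₁) := by
    rw [hz₁p']; field_simp
  have e2 : (1 - Q₂p) * z₂p = (1 - Q₁p) * (z₂ - Q₁ * z₁) := by
    rw [hz₂p]; field_simp
  have e3 : (1 - Q₁p) * z₂p⁻¹ = (1 - Q₂p) / (z₂ - Q₁ * z₁) := by
    rw [hz₂p]; field_simp
  have e4 : z₁p⁻¹ = (1 - Q₁p) * (z₂ - Q₁ * z₁) / (z₁ * z₂) := by
    rw [hz₁p', inv_div]
  have f1 : (1 - Q₁p) * (z₂ - Q₁ * z₁) =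
      (z₂ - Q₁ * z₁) - z₁ ^ 2 * Q₁ / (z₂ - Q₁ * z₁) := by
    have hM' : z₂ - z₁ * Q₁ ≠ 0 := by rwa [mul_comm]
    rw [hQ₁p]; field_simp [hM']
  have f2 : (1 - Q₂p) / (z₂ - Q₁ * z₁) = 1 / (z₂ - Q₁ * z₁) - z₂ * Q₂ := by
    rw [hQ₂p]; field_simp
  rw [e1, e2, e3, e4, f1, f2]
  have hM' : z₂ - z₁ * Q₁ ≠ 0 := by rwa [mul_comm]
  field_simp [hM']
  ring
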